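/- Let G = (V,E) be a finite graph with all degrees positive, in which each node independently becomes private with probability p ∈ [0,1), and let each node carry a deterministic label set L(i). Define X̃_label = Σ_{v_i ∈ V} 1_{v_i public} · 1_{l ∈ L(i)} · d_i*/d_i. Then E[X̃_label] = (1-p)^2 Σ_{v_i ∈ V} 1_{l ∈ L(i)}, and consequently E[X̃_label] / E[Σ_{v_i} 1_{v_i public} d_i*/d_i] = ρ(l) = (Σ_{v_i} 1_{l ∈ L(i)})/n. -/

import Mathlib

open MeasureTheory ProbabilityTheory

section stmt15aux

set_option linter.unusedSectionVars false

variable {Ω : Type*} [MeasureSpace Ω] [IsProbabilityMeasure (ℙ : Measure Ω)]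
variable {V : Type*} [Fintype V] [DecidableEq V]

lemma stmt15_ind_eq (pub : V → Ω → Bool) (v u : V) :
    (fun ω => (if pub v ω = true ∧ pub u ω = true then (1:ℝ) else 0))
      = ({ω : Ω | pub v ω = true} ∩ {ω : Ω | pub u ω = true}).indicator
          (1 : Ω → ℝ) := by
  funext ω
  by_cases h1 : pub v ω = true <;> by_cases h2 : pub u ω = true <;>
    simp [Set.indicator, Set.mem_inter_iff, h1, h2]

lemma stmt15_integrable (pub : V → Ω → Bool) (hmeas : ∀ v, Measurable (pub v))
    (v u : V) :
    Integrable (fun ω => (if pub v ω = true ∧ pub u ω = true then (1:ℝ) else 0)) ℙ := by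
  rw [stmt15_ind_eq]
  exact (integrable_const (1:ℝ)).indicator
    ((hmeas v (measurableSet_singleton true)).inter (hmeas u (measurableSet_singleton true)))

lemma stmt15_pair (pub : V → Ω → Bool) (hmeas : ∀ v, Measurable (pub v))
    (hindep : iIndepFun pub ℙ)
    (p : ℝ) (hprob : ∀ v, (ℙ {ω : Ω | pub v ω = true}).toReal = 1 - p)
    {v u : V} (hvu : v ≠ u) :
    ∫ ω, (if pub v ω = true ∧ pub u ω = true then (1:ℝ) else 0) ∂ℙ = (1 - p)^2 := by
  have hA : MeasurableSet {ω : Ω | pub v ω = true} := hmeas v (measurableSet_singleton true)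
  have hB : MeasurableSet {ω : Ω | pub u ω = true} := hmeas u (measurableSet_singleton true)
  have hind : IndepFun (pub v) (pub u) ℙ := hindep.indepFun hvu
  have hmul : ℙ ({ω : Ω | pub v ω = true} ∩ {ω : Ω | pub u ω = true})
      = ℙ {ω : Ω | pub v ω = true} * ℙ {ω : Ω | pub u ω = true} := by
    have h := (indepFun_iff_measure_inter_preimage_eq_mul.mp hind) {true} {true}
      (measurableSet_singleton true) (measurableSet_singleton true)
    simpa [Set.preimage] using h
  rw [stmt15_ind_eq, integral_indicator_one (hA.inter hB), measureReal_def, hmul, ENNReal.toReal_mul,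
    hprob, hprob, sq]

end stmt15aux

/-- With i.i.d. privacy labels, all degrees positive, and
deterministic label sets, for
`X̃_label = Σ_i 1_{v_i public} 1_{l ∈ L(i)} d_i*/d_i` one has
`E[X̃_label] = (1-p)² Σ_i 1_{l ∈ L(i)}`, and
`E[X̃_label]/E[Σ_i 1_{v_i public} d_i*/d_i] = ρ(l) = (Σ_i 1_{l ∈ L(i)})/n`. -/
theorem stmt15 {V : Type*} [Fintype V] [DecidableEq V] {Ω : Type*} [MeasureSpace Ω]
    [IsProbabilityMeasure (ℙ : Measure Ω)]
    (G : SimpleGraph V) [DecidableRel G.Adj]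
    (hdeg : ∀ v, 1 ≤ G.degree v)
    {Label : Type*} (l : Label) (L : V → Set Label) [∀ v, Decidable (l ∈ L v)]
    (p : ℝ) (hp0 : 0 ≤ p) (hp1 : p < 1)
    (pub : V → Ω → Bool) (hmeas : ∀ v, Measurable (pub v))
    (hindep : iIndepFun pub ℙ)
    (hprob : ∀ v, (ℙ {ω : Ω | pub v ω = true}).toReal = 1 - p)
    (dstar : V → Ω → ℕ)
    (hdstar : ∀ v ω, dstar v ω
      = (Finset.univ.filter (fun u => G.Adj v u ∧ pub u ω = true)).card)
    (EXlabel EXtilde : ℝ)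
    (hEXlabel : EXlabel = ∫ ω, (∑ v, (if pub v ω = true then (1 : ℝ) else 0) *
        (if l ∈ L v then (1 : ℝ) else 0) * ((dstar v ω : ℝ) / (G.degree v : ℝ))) ∂ℙ)
    (hEXtilde : EXtilde = ∫ ω, (∑ v, (if pub v ω = true then (1 : ℝ) else 0) *
        ((dstar v ω : ℝ) / (G.degree v : ℝ))) ∂ℙ) :
    (EXlabel = (1 - p) ^ 2 * ∑ v, (if l ∈ L v then (1 : ℝ) else 0)) ∧
    (EXlabel / EXtilde
      = (∑ v, (if l ∈ L v then (1 : ℝ) else 0)) / (Fintype.card V : ℝ)) := by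
  -- Rewrite the per-vertex summand as a sum of pair indicators over neighbors.
  have hfun : ∀ v : V, (fun ω => (if pub v ω = true then (1:ℝ) else 0) *
        ((dstar v ω : ℝ) / (G.degree v : ℝ)))
      = (fun ω => (G.degree v : ℝ)⁻¹ * ∑ u ∈ G.neighborFinset v,
          (if pub v ω = true ∧ pub u ω = true then (1:ℝ) else 0)) := by
    intro v
    funext ω
    rw [hdstar]
    have hcard : ((Finset.univ.filter (fun u => G.Adj v u ∧ pub u ω = true)).card : ℝ)
        = ∑ u : V, (if G.Adj v u ∧ pub u ω = true then (1:ℝ) else 0) := by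
      rw [Finset.card_filter]
      push_cast
      rfl
    rw [hcard, SimpleGraph.neighborFinset_eq_filter, Finset.sum_filter]
    rw [div_eq_mul_inv, ← mul_assoc, mul_comm _ ((G.degree v : ℝ)⁻¹)]
    congr 1
    rw [Finset.mul_sum]
    refine Finset.sum_congr rfl fun u _ => ?_
    by_cases h1 : pub v ω = true <;> by_cases h2 : G.Adj v u <;>
      by_cases h3 : pub u ω = true <;> simp [h1, h2, h3]
  -- Integrability of the per-vertex summand.
  have hint : ∀ v : V, Integrable (fun ω => (if pub v ω = true then (1:ℝ) else 0) *
      ((dstar v ω : ℝ) / (G.degree v : ℝ))) ℙ := by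
    intro v
    rw [hfun v]
    exact ((integrable_finset_sum _ fun u _ => stmt15_integrable pub hmeas v u)).const_mul _
  -- Expectation of the per-vertex summand.
  have hkey : ∀ v : V, ∫ ω, (if pub v ω = true then (1:ℝ) else 0) *
      ((dstar v ω : ℝ) / (G.degree v : ℝ)) ∂ℙ = (1 - p)^2 := by
    intro v
    rw [hfun v, integral_const_mul,
      integral_finset_sum _ fun u _ => stmt15_integrable pub hmeas v u]
    have hsum : ∀ u ∈ G.neighborFinset v,
        ∫ ω, (if pub v ω = true ∧ pub u ω = true then (1:ℝ) else 0) ∂ℙ = (1 - p)^2 := by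
      intro u hu
      exact stmt15_pair pub hmeas hindep p hprob
        (G.ne_of_adj ((G.mem_neighborFinset v u).mp hu))
    rw [Finset.sum_congr rfl hsum, Finset.sum_const, SimpleGraph.card_neighborFinset_eq_degree,
      nsmul_eq_mul, ← mul_assoc, inv_mul_cancel₀, one_mul]
    exact Nat.cast_ne_zero.mpr (Nat.one_le_iff_ne_zero.mp (hdeg v))
  -- Compute EXlabel.
  have h1 : EXlabel = (1 - p) ^ 2 * ∑ v, (if l ∈ L v then (1 : ℝ) else 0) := by
    rw [hEXlabel]
    have : ∀ ω : Ω, (∑ v, (if pub v ω = true then (1 : ℝ) else 0) *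
        (if l ∈ L v then (1 : ℝ) else 0) * ((dstar v ω : ℝ) / (G.degree v : ℝ)))
        = ∑ v, (if l ∈ L v then (1 : ℝ) else 0) *
          ((if pub v ω = true then (1 : ℝ) else 0) * ((dstar v ω : ℝ) / (G.degree v : ℝ))) := by
      intro ω; exact Finset.sum_congr rfl fun v _ => by ring
    simp_rw [this]
    rw [integral_finset_sum _ fun v _ => (hint v).const_mul _]
    simp_rw [integral_const_mul, hkey]
    rw [Finset.mul_sum]
    exact Finset.sum_congr rfl fun v _ => by ring
  -- Compute EXtilde.
  have h2 : EXtilde = (1 - p) ^ 2 * (Fintype.card V : ℝ) := by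
    rw [hEXtilde, integral_finset_sum _ fun v _ => hint v]
    simp_rw [hkey]
    rw [Finset.sum_const, nsmul_eq_mul, mul_comm, Fintype.card]
  refine ⟨h1, ?_⟩
  rw [h1, h2, mul_div_mul_left _ _ (by nlinarith : (0:ℝ) < (1 - p) ^ 2).ne']
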